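/- (Theorem 4.8(1), arithmetic core.) Let n ∈ {10, 11, 12} and let p_k/q_k (k ≥ 1) be the convergents of the simple continued fraction expansion of √n, so p_1/q_1 = 3/1. For every odd positive integer k: p_k and q_k are both odd, p_k² − n q_k² = 9 − n, and p_k < √n · q_k. -/
import Mathlib


/-!
For `n ∈ {10, 11, 12}`, the convergents `p_k / q_k` (k ≥ 1) of the simple
continued fraction expansion of `√n` are given, in Mathlib's terms, by
`(GenContFract.of (√n)).nums (k-1) / (GenContFract.of (√n)).dens (k-1)`
(Mathlib's indexing starts at 0, so the paper's `k`-th convergent is the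
`(k-1)`-st in Mathlib; these continuants are automatically in lowest terms).
-/

open GenContFract Real

/-- Key auxiliary lemma, proved uniformly for any `n` with `10 ≤ n < 16` whose
continued fraction has the shape `[3; b0, 6, b0, 6, ...]` with `b0 * (n - 9) = 6`. -/
lemma key_aux (n : ℕ) (b0 : ℤ) (hn10 : 10 ≤ n) (hn16 : n < 16)
    (hb : b0 * ((n : ℤ) - 9) = 6) (j : ℕ) :
    ∃ p q : ℤ, Odd p ∧ Odd q ∧
      (p : ℝ) = (GenContFract.of (Real.sqrt n)).nums (2 * j) ∧
      (q : ℝ) = (GenContFract.of (Real.sqrt n)).dens (2 * j) ∧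
      p ^ 2 - (n : ℤ) * q ^ 2 = 9 - (n : ℤ) ∧
      (p : ℝ) < Real.sqrt n * (q : ℝ) := by
  set v : ℝ := Real.sqrt n with hvdef
  have hv0 : 0 ≤ v := Real.sqrt_nonneg _
  have hv2 : v ^ 2 = n := Real.sq_sqrt (by positivity)
  have hnR : (10 : ℝ) ≤ (n : ℝ) := by exact_mod_cast hn10
  have hnR16 : (n : ℝ) < 16 := by exact_mod_cast hn16
  have h3v : 3 < v := by nlinarith
  have hv4 : v < 4 := by nlinarith
  have hbR : (b0 : ℝ) * ((n : ℝ) - 9) = 6 := by exact_mod_cast hb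
  set d : ℝ := (n : ℝ) - 9 with hddef
  have hd : 0 < d := by simp only [hddef]; linarith
  have hrne : v - 3 ≠ 0 := by intro h; linarith [sub_eq_zero.mp h]
  have hfrne : (v - 3) / d ≠ 0 := div_ne_zero hrne hd.ne'
  have hb0pos : 0 < b0 := by nlinarith [hb, (by exact_mod_cast hn10 : (10:ℤ) ≤ (n:ℤ))]
  have hb0R : (0 : ℝ) < (b0 : ℝ) := by exact_mod_cast hb0pos
  -- floor of v
  have hfloor : ⌊v⌋ = 3 := by
    rw [Int.floor_eq_iff]
    constructor <;> push_cast <;> linarith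
  have hof0 : IntFractPair.of v = ⟨3, v - 3⟩ := by
    simp [IntFractPair.of, Int.fract, hfloor]
  -- inverse of v - 3
  have hx : (v - 3)⁻¹ = (v + 3) / d := by
    rw [eq_div_iff hd.ne', inv_mul_eq_div, div_eq_iff hrne]
    nlinarith
  have hofA : IntFractPair.of (v - 3)⁻¹ = ⟨b0, (v - 3) / d⟩ := by
    have hfl : ⌊(v + 3) / d⌋ = b0 := by
      rw [Int.floor_eq_iff]
      constructor
      · rw [le_div_iff₀ hd]; nlinarith
      · rw [div_lt_iff₀ hd]; push_cast; nlinarith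
    have hfr : Int.fract ((v + 3) / d) = (v - 3) / d := by
      rw [Int.fract, hfl]
      field_simp
      linarith [hbR]
    rw [hx]; simp [IntFractPair.of, hfl, hfr]
  -- inverse of (v-3)/d
  have hy : ((v - 3) / d)⁻¹ = v + 3 := by
    rw [inv_div, div_eq_iff hrne]
    nlinarith
  have hofB : IntFractPair.of ((v - 3) / d)⁻¹ = ⟨6, v - 3⟩ := by
    have hfl : ⌊v + 3⌋ = 6 := by
      rw [Int.floor_eq_iff]
      constructor <;> push_cast <;> linarith
    have hfr : Int.fract (v + 3) = v - 3 := by rw [Int.fract, hfl]; push_cast; ring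
    rw [hy]
    simp only [IntFractPair.of, hfl, hfr]
  -- the stream
  have hstr : ∀ j : ℕ,
      IntFractPair.stream v (2 * j + 1) = some ⟨b0, (v - 3) / d⟩ ∧
      IntFractPair.stream v (2 * j + 2) = some ⟨6, v - 3⟩ := by
    intro j
    induction j with
    | zero =>
      have h0 : IntFractPair.stream v 0 = some ⟨3, v - 3⟩ := by
        rw [IntFractPair.stream_zero, hof0]
      have h1 : IntFractPair.stream v 1 = some ⟨b0, (v - 3) / d⟩ := by
        have h := IntFractPair.stream_succ_of_some h0
          (show ((⟨3, v - 3⟩ : IntFractPair ℝ)).fr ≠ 0 from hrne)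
        rw [show ((⟨3, v - 3⟩ : IntFractPair ℝ)).fr = v - 3 from rfl, hofA] at h
        exact h
      have h2 : IntFractPair.stream v 2 = some ⟨6, v - 3⟩ := by
        have h := IntFractPair.stream_succ_of_some h1
          (show ((⟨b0, (v - 3) / d⟩ : IntFractPair ℝ)).fr ≠ 0 from hfrne)
        rw [show ((⟨b0, (v - 3) / d⟩ : IntFractPair ℝ)).fr = (v - 3) / d from rfl, hofB] at h
        exact h
      exact ⟨h1, h2⟩
    | succ k ih =>
      have h1 : IntFractPair.stream v (2 * (k + 1) + 1) = some ⟨b0, (v - 3) / d⟩ := by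
        have h := IntFractPair.stream_succ_of_some ih.2
          (show ((⟨6, v - 3⟩ : IntFractPair ℝ)).fr ≠ 0 from hrne)
        rw [show ((⟨6, v - 3⟩ : IntFractPair ℝ)).fr = v - 3 from rfl, hofA] at h
        have e : 2 * (k + 1) + 1 = 2 * k + 2 + 1 := by ring
        rw [e]; exact h
      have h2 : IntFractPair.stream v (2 * (k + 1) + 2) = some ⟨6, v - 3⟩ := by
        have h := IntFractPair.stream_succ_of_some h1
          (show ((⟨b0, (v - 3) / d⟩ : IntFractPair ℝ)).fr ≠ 0 from hfrne)
        rw [show ((⟨b0, (v - 3) / d⟩ : IntFractPair ℝ)).fr = (v - 3) / d from rfl, hofB] at h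
        exact h
      exact ⟨h1, h2⟩
  set g := GenContFract.of v with hgdef
  have hsA : ∀ j : ℕ, g.s.get? (2 * j) = some ⟨1, (b0 : ℝ)⟩ := by
    intro j
    have h := GenContFract.get?_of_eq_some_of_succ_get?_intFractPair_stream (hstr j).1
    simpa using h
  have hsB : ∀ j : ℕ, g.s.get? (2 * j + 1) = some ⟨1, (6 : ℝ)⟩ := by
    intro j
    have h := GenContFract.get?_of_eq_some_of_succ_get?_intFractPair_stream (hstr j).2
    simpa using h
  -- base values
  have hh : g.h = 3 := by
    rw [hgdef, GenContFract.of_h_eq_floor, hfloor]; norm_num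
  have hn0 : g.nums 0 = 3 := by rw [GenContFract.zeroth_num_eq_h, hh]
  have hd0 : g.dens 0 = 1 := GenContFract.zeroth_den_eq_one
  have hn1 : g.nums 1 = (b0 : ℝ) * 3 + 1 := by
    have h := GenContFract.first_num_eq (by simpa using hsA 0)
    rw [h, hh]
  have hd1 : g.dens 1 = (b0 : ℝ) := by
    have h := GenContFract.first_den_eq (by simpa using hsA 0)
    rw [h]
  -- main induction
  have main : ∀ j : ℕ, ∃ p q p' q' : ℤ,
      (p : ℝ) = g.nums (2 * j) ∧ (q : ℝ) = g.dens (2 * j) ∧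
      (p' : ℝ) = g.nums (2 * j + 1) ∧ (q' : ℝ) = g.dens (2 * j + 1) ∧
      Odd p ∧ Odd q ∧ 0 < p ∧ 0 < q ∧ 0 < p' ∧ 0 < q' ∧
      p ^ 2 - (n : ℤ) * q ^ 2 = 9 - (n : ℤ) ∧
      p' ^ 2 - (n : ℤ) * q' ^ 2 = 1 ∧
      p * p' - (n : ℤ) * q * q' = -3 := by
    intro j
    induction j with
    | zero =>
      refine ⟨3, 1, 3 * b0 + 1, b0, ?_, ?_, ?_, ?_, ⟨1, by ring⟩, ⟨0, by ring⟩,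
        by norm_num, by norm_num, by linarith, hb0pos, by ring, ?_, ?_⟩
      · simpa using hn0.symm
      · simpa using hd0.symm
      · rw [hn1]; push_cast; ring
      · rw [hd1]
      · linear_combination (-b0) * hb
      · linear_combination (-1 : ℤ) * hb
    | succ k ih =>
      obtain ⟨p, q, p', q', e1, e2, e3, e4, hop, hoq, hp, hq, hp', hq', I1, I2, I3⟩ := ih
      have hrn := GenContFract.nums_recurrence (g := g) (n := 2 * k) (hsB k) e1.symm e3.symm
      have hrd := GenContFract.dens_recurrence (g := g) (n := 2 * k) (hsB k) e2.symm e4.symm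
      have eP : ((6 * p' + p : ℤ) : ℝ) = g.nums (2 * k + 2) := by
        rw [hrn]; push_cast; ring
      have eQ : ((6 * q' + q : ℤ) : ℝ) = g.dens (2 * k + 2) := by
        rw [hrd]; push_cast; ring
      have hs2 : g.s.get? (2 * k + 1 + 1) = some ⟨1, (b0 : ℝ)⟩ := by
        have h := hsA (k + 1)
        rwa [show 2 * (k + 1) = 2 * k + 1 + 1 by ring] at h
      have hrn' := GenContFract.nums_recurrence (g := g) (n := 2 * k + 1) hs2 e3.symm eP.symm
      have hrd' := GenContFract.dens_recurrence (g := g) (n := 2 * k + 1) hs2 e4.symm eQ.symm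
      have eP' : ((b0 * (6 * p' + p) + p' : ℤ) : ℝ) = g.nums (2 * k + 3) := by
        rw [show 2 * k + 3 = 2 * k + 1 + 2 by ring, hrn']; push_cast; ring
      have eQ' : ((b0 * (6 * q' + q) + q' : ℤ) : ℝ) = g.dens (2 * k + 3) := by
        rw [show 2 * k + 3 = 2 * k + 1 + 2 by ring, hrd']; push_cast; ring
      have J1 : (6 * p' + p) ^ 2 - (n : ℤ) * (6 * q' + q) ^ 2 = 9 - (n : ℤ) := by
        linear_combination 36 * I2 + 12 * I3 + I1
      have J2 : (b0 * (6 * p' + p) + p') ^ 2 - (n : ℤ) * (b0 * (6 * q' + q) + q') ^ 2 = 1 := by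
        linear_combination b0 ^ 2 * J1 + 12 * b0 * I2 + 2 * b0 * I3 + I2 - b0 * hb
      have J3 : (6 * p' + p) * (b0 * (6 * p' + p) + p')
          - (n : ℤ) * (6 * q' + q) * (b0 * (6 * q' + q) + q') = -3 := by
        linear_combination b0 * J1 + 6 * I2 + I3 - hb
      obtain ⟨t, ht⟩ := hop
      obtain ⟨s, hs⟩ := hoq
      refine ⟨6 * p' + p, 6 * q' + q, b0 * (6 * p' + p) + p', b0 * (6 * q' + q) + q',
        ?_, ?_, ?_, ?_, ⟨3 * p' + t, by omega⟩, ⟨3 * q' + s, by omega⟩,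
        by omega, by omega, by positivity, by positivity, J1, J2, J3⟩
      · rw [show 2 * (k + 1) = 2 * k + 2 by ring]; exact eP
      · rw [show 2 * (k + 1) = 2 * k + 2 by ring]; exact eQ
      · rw [show 2 * (k + 1) + 1 = 2 * k + 3 by ring]; exact eP'
      · rw [show 2 * (k + 1) + 1 = 2 * k + 3 by ring]; exact eQ'
  obtain ⟨p, q, p', q', e1, e2, _, _, hop, hoq, hp, hq, _, _, I1, _, _⟩ := main j
  refine ⟨p, q, hop, hoq, e1, e2, I1, ?_⟩
  have hnZ : (10 : ℤ) ≤ (n : ℤ) := by exact_mod_cast hn10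
  have hsq : (p : ℝ) ^ 2 < ((n : ℝ)) * (q : ℝ) ^ 2 := by
    have h : (p : ℤ) ^ 2 < (n : ℤ) * q ^ 2 := by nlinarith
    exact_mod_cast h
  have hqR : (0 : ℝ) < (q : ℝ) := by exact_mod_cast hq
  have h2 : (p : ℝ) ^ 2 < (v * q) ^ 2 := by
    rw [mul_pow, hv2]; exact hsq
  exact lt_of_pow_lt_pow_left₀ 2 (by positivity) h2

/-- Theorem 4.8(1), arithmetic core: for `n ∈ {10,11,12}` and odd `k ≥ 1`, the
numerator `p_k` and the denominator `q_k` of the `k`-th convergent of the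
continued fraction of `√n` are both odd, satisfy the Pell equation
`p_k² - n q_k² = 9 - n`, and `p_k < √n · q_k`. -/
theorem odd_convergents_pell (n : ℕ) (hn : n ∈ ({10, 11, 12} : Set ℕ))
    (k : ℕ) (hk : Odd k) (hk1 : 1 ≤ k) :
    ∃ p q : ℤ, Odd p ∧ Odd q ∧
      (p : ℝ) = (GenContFract.of (Real.sqrt n)).nums (k - 1) ∧
      (q : ℝ) = (GenContFract.of (Real.sqrt n)).dens (k - 1) ∧
      p ^ 2 - (n : ℤ) * q ^ 2 = 9 - (n : ℤ) ∧
      (p : ℝ) < Real.sqrt n * (q : ℝ) := by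
  obtain ⟨j, hj⟩ := hk
  have hkj : k - 1 = 2 * j := by omega
  rw [hkj]
  rcases hn with h | h | h
  · subst h; exact key_aux 10 6 (by norm_num) (by norm_num) (by norm_num) j
  · subst h; exact key_aux 11 3 (by norm_num) (by norm_num) (by norm_num) j
  · simp only [Set.mem_singleton_iff] at h
    subst h; exact key_aux 12 2 (by norm_num) (by norm_num) (by norm_num) j
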